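/- Let φ: R^D → R^D be an affine map x ↦ α + xM with block matrix M = [[A, C], [O, B]] where A is ℓ×ℓ, B is (D−ℓ)×(D−ℓ) invertible, and O is the zero block. If A is unimodular (integer matrix with determinant ±1), B and C are integer matrices, and α is an integer vector, then φ maps any ℓ-dimensional integral affine subspace of R^D to an ℓ-dimensional integral affine subspace. -/

import Mathlib

open Matrix Finset


/-- A point of `ℝ^n` is a lattice point if all its coordinates are integers. -/
def isInt {n : ℕ} (x : Fin n → ℝ) : Prop := ∀ i, ∃ z : ℤ, x i = (z : ℝ)

/-- An affine subspace `W ⊆ ℝ^D` of dimension `ℓ` is integral if it contains a lattice point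
and the projection to the first `ℓ` coordinates maps `lin(W) ∩ ℤ^D` onto `ℤ^ℓ`. -/
def IsIntegralAffine (D ℓ : ℕ) (h : ℓ ≤ D) (W : AffineSubspace ℝ (Fin D → ℝ)) : Prop :=
  (∃ x ∈ W, isInt x) ∧
  (fun x : Fin D → ℝ => fun i : Fin ℓ => x (Fin.castLE h i)) ''
    {x | x ∈ W.direction ∧ isInt x} = {z : Fin ℓ → ℝ | isInt z}

lemma fin_aux {D ℓ : ℕ} (k : Fin (D - ℓ)) : ℓ + (k : ℕ) < D := by
  have := k.2; omega

lemma sum_split (D ℓ : ℕ) (hℓ : ℓ ≤ D) (g : Fin D → ℝ) :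
    ∑ i, g i = (∑ i : Fin ℓ, g (Fin.castLE hℓ i)) +
      ∑ k : Fin (D - ℓ), g ⟨ℓ + (k : ℕ), fin_aux k⟩ := by
  have h' : ℓ + (D - ℓ) = D := by omega
  rw [← Equiv.sum_comp (finSumFinEquiv.trans (finCongr h')) g, Fintype.sum_sum_type]
  refine congrArg₂ (· + ·) ?_ ?_
  · exact Finset.sum_congr rfl fun i _ => by congr 1
  · exact Finset.sum_congr rfl fun k _ => by congr 1

section main
variable (D ℓ : ℕ) (hℓ : ℓ ≤ D) (M : Matrix (Fin D) (Fin D) ℝ)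
  (A : Matrix (Fin ℓ) (Fin ℓ) ℤ)

lemma Mint
    (hA : ∀ i j : Fin ℓ, M (Fin.castLE hℓ i) (Fin.castLE hℓ j) = (A i j : ℝ))
    (hO : ∀ i j : Fin D, ℓ ≤ (i : ℕ) → (j : ℕ) < ℓ → M i j = 0)
    (hC : ∀ i j : Fin D, (i : ℕ) < ℓ → ℓ ≤ (j : ℕ) → ∃ z : ℤ, M i j = (z : ℝ))
    (hBint : ∀ i j : Fin D, ℓ ≤ (i : ℕ) → ℓ ≤ (j : ℕ) → ∃ z : ℤ, M i j = (z : ℝ)) :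
    ∀ i j : Fin D, ∃ z : ℤ, M i j = (z : ℝ) := by
  intro i j
  rcases lt_or_ge (i : ℕ) ℓ with hi | hi
  · rcases lt_or_ge (j : ℕ) ℓ with hj | hj
    · refine ⟨A ⟨i, hi⟩ ⟨j, hj⟩, ?_⟩
      have := hA ⟨i, hi⟩ ⟨j, hj⟩
      have hi' : Fin.castLE hℓ (⟨(i : ℕ), hi⟩ : Fin ℓ) = i := by apply Fin.ext; rfl
      have hj' : Fin.castLE hℓ (⟨(j : ℕ), hj⟩ : Fin ℓ) = j := by apply Fin.ext; rfl
      rwa [hi', hj'] at this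
    · exact hC i j hi hj
  · rcases lt_or_ge (j : ℕ) ℓ with hj | hj
    · exact ⟨0, by rw [hO i j hi hj]; norm_num⟩
    · exact hBint i j hi hj

lemma vecMul_int {x : Fin D → ℝ} (hMint : ∀ i j : Fin D, ∃ z : ℤ, M i j = (z : ℝ))
    (hx : isInt x) : isInt (x ᵥ* M) := by
  intro j
  choose zx hzx using hx
  choose zM hzM using hMint
  refine ⟨∑ i, zx i * zM i j, ?_⟩
  show ∑ i, x i * M i j = _
  push_cast
  exact Finset.sum_congr rfl fun i _ => by rw [hzx, hzM]

lemma proj_vecMul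
    (hA : ∀ i j : Fin ℓ, M (Fin.castLE hℓ i) (Fin.castLE hℓ j) = (A i j : ℝ))
    (hO : ∀ i j : Fin D, ℓ ≤ (i : ℕ) → (j : ℕ) < ℓ → M i j = 0) (v : Fin D → ℝ) :
    (fun j : Fin ℓ => (v ᵥ* M) (Fin.castLE hℓ j)) =
      (fun i : Fin ℓ => v (Fin.castLE hℓ i)) ᵥ* (A.map (Int.cast : ℤ → ℝ)) := by
  funext j
  show ∑ i, v i * M i (Fin.castLE hℓ j) = ∑ i : Fin ℓ, v (Fin.castLE hℓ i) * (A i j : ℝ)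
  rw [sum_split D ℓ hℓ]
  have h2 : ∑ k : Fin (D - ℓ),
      v ⟨ℓ + (k : ℕ), fin_aux k⟩ *
        M ⟨ℓ + (k : ℕ), fin_aux k⟩ (Fin.castLE hℓ j) = 0 := by
    refine Finset.sum_eq_zero fun k _ => ?_
    rw [hO _ _ (by simp) (by simpa using j.2), mul_zero]
  rw [h2, add_zero]
  exact Finset.sum_congr rfl fun i _ => by rw [hA]

end main

section inj
variable (D ℓ : ℕ) (hℓ : ℓ ≤ D) (M : Matrix (Fin D) (Fin D) ℝ)
  (A : Matrix (Fin ℓ) (Fin ℓ) ℤ)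

lemma vecMul_eq_zero_of_det {n : ℕ} (N : Matrix (Fin n) (Fin n) ℝ) (hN : N.det ≠ 0)
    {u : Fin n → ℝ} (hu : u ᵥ* N = 0) : u = 0 := by
  have hNu : IsUnit N.det := isUnit_iff_ne_zero.2 hN
  have : u ᵥ* (N * N⁻¹) = 0 := by rw [← Matrix.vecMul_vecMul, hu, Matrix.zero_vecMul]
  rwa [Matrix.mul_nonsing_inv _ hNu, Matrix.vecMul_one] at this

lemma vecMul_inj (hAdet : A.det = 1 ∨ A.det = -1)
    (hA : ∀ i j : Fin ℓ, M (Fin.castLE hℓ i) (Fin.castLE hℓ j) = (A i j : ℝ))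
    (hO : ∀ i j : Fin D, ℓ ≤ (i : ℕ) → (j : ℕ) < ℓ → M i j = 0)
    (hBinv : (Matrix.of fun i j : Fin (D - ℓ) =>
        M (⟨ℓ + (i : ℕ), fin_aux i⟩ : Fin D)
          (⟨ℓ + (j : ℕ), fin_aux j⟩ : Fin D)).det ≠ 0) :
    Function.Injective M.vecMulLinear := by
  rw [injective_iff_map_eq_zero]
  intro v hv
  have hv' : v ᵥ* M = 0 := hv
  -- first block
  have hdetA : (A.map (Int.cast : ℤ → ℝ)).det ≠ 0 := by
    have he : A.map (Int.cast : ℤ → ℝ) = (Int.castRingHom ℝ).mapMatrix A := rfl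
    rw [he, ← RingHom.map_det]
    rcases hAdet with h | h <;> simp [h]
  have hu0 : (fun i : Fin ℓ => v (Fin.castLE hℓ i)) = 0 := by
    refine vecMul_eq_zero_of_det _ hdetA ?_
    rw [← proj_vecMul D ℓ hℓ M A hA hO v]
    funext j; simp [hv']
  -- second block
  have hw0 : (fun k : Fin (D - ℓ) => v (⟨ℓ + (k : ℕ), fin_aux k⟩ : Fin D)) = 0 := by
    refine vecMul_eq_zero_of_det _ hBinv ?_
    funext j
    have h0 : (v ᵥ* M) (⟨ℓ + (j : ℕ), fin_aux j⟩ : Fin D) = 0 := by rw [hv']; rfl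
    have hs : (v ᵥ* M) (⟨ℓ + (j : ℕ), fin_aux j⟩ : Fin D) =
        ∑ i, v i * M i (⟨ℓ + (j : ℕ), fin_aux j⟩ : Fin D) := rfl
    rw [hs, sum_split D ℓ hℓ] at h0
    have h1 : ∑ i : Fin ℓ, v (Fin.castLE hℓ i) *
        M (Fin.castLE hℓ i) (⟨ℓ + (j : ℕ), fin_aux j⟩ : Fin D) = 0 := by
      refine Finset.sum_eq_zero fun i _ => ?_
      have : v (Fin.castLE hℓ i) = 0 := congrFun hu0 i
      rw [this, zero_mul]
    rw [h1, zero_add] at h0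
    exact h0
  funext i
  rcases lt_or_ge (i : ℕ) ℓ with hi | hi
  · have : Fin.castLE hℓ (⟨(i : ℕ), hi⟩ : Fin ℓ) = i := by apply Fin.ext; rfl
    have h := congrFun hu0 ⟨(i : ℕ), hi⟩
    rw [this] at h; exact h
  · have hk : (i : ℕ) - ℓ < D - ℓ := by have := i.2; omega
    have : (⟨ℓ + ((⟨(i : ℕ) - ℓ, hk⟩ : Fin (D - ℓ)) : ℕ), by omega⟩ : Fin D) = i := by
      apply Fin.ext; simp; omega
    have h := congrFun hw0 ⟨(i : ℕ) - ℓ, hk⟩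
    simp only at h
    rw [this] at h; exact h

end inj

/-- Let `φ : ℝ^D → ℝ^D`, `φ(x) = α + x M` with `M = [[A, C], [0, B]]` block upper triangular,
`A` an `ℓ×ℓ` unimodular integer matrix, `B` an invertible `(D-ℓ)×(D-ℓ)` integer matrix,
`C` an integer matrix, and `α` an integer vector. Then `φ` maps every `ℓ`-dimensional
integral affine subspace onto an `ℓ`-dimensional integral affine subspace. -/
theorem affine_map_preserves_integrality (D ℓ : ℕ) (hℓ : ℓ ≤ D)
    (M : Matrix (Fin D) (Fin D) ℝ) (α : Fin D → ℝ) (hα : isInt α)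
    (A : Matrix (Fin ℓ) (Fin ℓ) ℤ) (hAdet : A.det = 1 ∨ A.det = -1)
    (hA : ∀ i j : Fin ℓ, M (Fin.castLE hℓ i) (Fin.castLE hℓ j) = (A i j : ℝ))
    (hO : ∀ i j : Fin D, ℓ ≤ (i : ℕ) → (j : ℕ) < ℓ → M i j = 0)
    (hC : ∀ i j : Fin D, (i : ℕ) < ℓ → ℓ ≤ (j : ℕ) → ∃ z : ℤ, M i j = (z : ℝ))
    (hBint : ∀ i j : Fin D, ℓ ≤ (i : ℕ) → ℓ ≤ (j : ℕ) → ∃ z : ℤ, M i j = (z : ℝ))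
    (hBinv : (Matrix.of fun i j : Fin (D - ℓ) =>
        M (⟨ℓ + (i : ℕ), by have := i.2; omega⟩ : Fin D)
          (⟨ℓ + (j : ℕ), by have := j.2; omega⟩ : Fin D)).det ≠ 0)
    (W : AffineSubspace ℝ (Fin D → ℝ)) (hWne : (W : Set (Fin D → ℝ)).Nonempty)
    (hWdim : Module.finrank ℝ W.direction = ℓ)
    (hWint : IsIntegralAffine D ℓ hℓ W) :
    ∃ W' : AffineSubspace ℝ (Fin D → ℝ),
      (W' : Set (Fin D → ℝ)) = (fun x => α + Matrix.vecMul x M) '' (W : Set (Fin D → ℝ)) ∧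
      Module.finrank ℝ W'.direction = ℓ ∧
      IsIntegralAffine D ℓ hℓ W' := by
  have hMint := Mint D ℓ hℓ M A hA hO hC hBint
  have hinj := vecMul_inj D ℓ hℓ M A hAdet hA hO hBinv
  let φ : (Fin D → ℝ) →ᵃ[ℝ] (Fin D → ℝ) :=
    { toFun := fun x => α + x ᵥ* M
      linear := M.vecMulLinear
      map_vadd' := by
        intro p v
        show α + (v + p) ᵥ* M = v ᵥ* M + (α + p ᵥ* M)
        rw [Matrix.add_vecMul]; ring }
  have hlin : φ.linear = M.vecMulLinear := rfl
  refine ⟨W.map φ, ?_, ?_, ?_, ?_⟩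
  · rw [AffineSubspace.coe_map]; rfl
  · rw [AffineSubspace.map_direction, hlin]
    exact ((Submodule.equivMapOfInjective _ hinj W.direction).finrank_eq.symm).trans hWdim
  · obtain ⟨x, hxW, hxI⟩ := hWint.1
    refine ⟨α + x ᵥ* M, AffineSubspace.mem_map.2 ⟨x, hxW, rfl⟩, ?_⟩
    intro i
    obtain ⟨a, ha⟩ := hα i
    obtain ⟨b, hb⟩ := vecMul_int D M hMint hxI i
    exact ⟨a + b, by show α i + (x ᵥ* M) i = _; rw [ha, hb]; push_cast; ring⟩
  · ext z
    simp only [Set.mem_image, Set.mem_setOf_eq]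
    constructor
    · rintro ⟨x, ⟨-, hxint⟩, rfl⟩
      intro i
      exact hxint _
    · intro hz
      choose zz hzz using hz
      have hAunit : IsUnit A.det := Int.isUnit_iff.2 hAdet
      have huA : (zz ᵥ* A⁻¹) ᵥ* A = zz := by
        rw [Matrix.vecMul_vecMul, Matrix.nonsing_inv_mul _ hAunit, Matrix.vecMul_one]
      set u : Fin ℓ → ℤ := zz ᵥ* A⁻¹ with hu
      have hmem : (fun i => (u i : ℝ)) ∈ {z : Fin ℓ → ℝ | isInt z} := fun i => ⟨u i, rfl⟩
      rw [← hWint.2] at hmem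
      obtain ⟨x, ⟨hxdir, hxint⟩, hxproj⟩ := hmem
      refine ⟨x ᵥ* M, ⟨?_, vecMul_int D M hMint hxint⟩, ?_⟩
      · rw [AffineSubspace.map_direction, hlin]
        exact Submodule.mem_map_of_mem hxdir
      · show (fun j : Fin ℓ => (x ᵥ* M) (Fin.castLE hℓ j)) = z
        rw [proj_vecMul D ℓ hℓ M A hA hO x]
        have hxproj' : (fun i : Fin ℓ => x (Fin.castLE hℓ i)) = fun i => (u i : ℝ) := hxproj
        rw [hxproj']
        funext j
        have hc := (RingHom.map_vecMul (Int.castRingHom ℝ) A u j).symm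
        have : ((Int.castRingHom ℝ) ∘ u) ᵥ* A.map (Int.castRingHom ℝ) =
            (fun i => (u i : ℝ)) ᵥ* A.map (Int.cast : ℤ → ℝ) := rfl
        rw [this] at hc
        rw [hc, huA, hzz]; simp
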